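/- Let S ⊆ ℝⁿ be a nonempty closed convex set and let 𝒜 : ℝⁿ → ℝⁿ be pseudo-monotone. Let x* ∈ S satisfy ⟨𝒜(x*), z − x*⟩ ≥ 0 for all z ∈ S. Let x ∈ ℝⁿ, λ > 0, μ ∈ (0,1), and γ ∈ (0,2). Set y = P_S(x − λ𝒜(x)), assume x ≠ y and λ‖𝒜(x) − 𝒜(y)‖ ≤ μ‖x − y‖, and define d = x − y − λ(𝒜(x) − 𝒜(y)), ρ = ⟨x − y, d⟩/‖d‖², and x⁺ = P_S(x − γλρ𝒜(y)). Then ‖x⁺ − x*‖² ≤ ‖x − x*‖² − ‖x − x⁺ − γρd‖² − (2 − γ)γρ²‖d‖². -/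

import Mathlib

open scoped RealInnerProductSpace

lemma proj_char {n : ℕ} {S : Set (EuclideanSpace ℝ (Fin n))} (hScv : Convex ℝ S)
    {u y : EuclideanSpace ℝ (Fin n)} (hy : y ∈ S)
    (hmin : ∀ w ∈ S, ‖u - y‖ ≤ ‖u - w‖) :
    ∀ w ∈ S, ⟪u - y, w - y⟫ ≤ 0 := by
  rw [← norm_eq_iInf_iff_real_inner_le_zero hScv hy]
  haveI : Nonempty S := ⟨⟨y, hy⟩⟩
  apply le_antisymm
  · exact le_ciInf fun w => hmin w w.2
  · exact ciInf_le ⟨0, fun _ ⟨_, h⟩ => h ▸ norm_nonneg _⟩ (⟨y, hy⟩ : S)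

/-- Lemma 3.2: One step of the projection–contraction iteration
does not only not increase the distance to a solution x* of the variational
inequality, but satisfies
‖x⁺ − x*‖² ≤ ‖x − x*‖² − ‖x − x⁺ − γρd‖² − (2 − γ)γρ²‖d‖². -/
theorem stmt_6 {n : ℕ} (S : Set (EuclideanSpace ℝ (Fin n)))
    (hSne : S.Nonempty) (hScl : IsClosed S) (hScv : Convex ℝ S)
    (A : EuclideanSpace ℝ (Fin n) → EuclideanSpace ℝ (Fin n))
    (hpm : ∀ a b : EuclideanSpace ℝ (Fin n),
      (0 : ℝ) ≤ inner ℝ (A a) (b - a) → (0 : ℝ) ≤ inner ℝ (A b) (b - a))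
    (xs : EuclideanSpace ℝ (Fin n)) (hxsS : xs ∈ S)
    (hxs : ∀ z ∈ S, (0 : ℝ) ≤ inner ℝ (A xs) (z - xs))
    (x y xp : EuclideanSpace ℝ (Fin n))
    (lam μ γ : ℝ) (hlam : 0 < lam) (hμ0 : 0 < μ) (hμ1 : μ < 1)
    (hγ0 : 0 < γ) (hγ2 : γ < 2)
    (hyS : y ∈ S) (hyproj : ∀ w ∈ S, ‖x - lam • A x - y‖ ≤ ‖x - lam • A x - w‖)
    (hxy : x ≠ y)
    (hls : lam * ‖A x - A y‖ ≤ μ * ‖x - y‖)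
    (d : EuclideanSpace ℝ (Fin n)) (hd : d = x - y - lam • (A x - A y))
    (ρ : ℝ) (hρ : ρ = (inner ℝ (x - y) d : ℝ) / ‖d‖ ^ 2)
    (hxpS : xp ∈ S)
    (hxpproj : ∀ w ∈ S,
      ‖x - (γ * lam * ρ) • A y - xp‖ ≤ ‖x - (γ * lam * ρ) • A y - w‖) :
    ‖xp - xs‖ ^ 2 ≤ ‖x - xs‖ ^ 2 - ‖x - xp - (γ * ρ) • d‖ ^ 2
      - (2 - γ) * γ * ρ ^ 2 * ‖d‖ ^ 2 := by
  -- d ≠ 0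
  have hxy' : (0:ℝ) < ‖x - y‖ := by
    rw [norm_pos_iff, sub_ne_zero]; exact hxy
  have hdlow : (1 - μ) * ‖x - y‖ ≤ ‖d‖ := by
    have h1 : ‖lam • (A x - A y)‖ = lam * ‖A x - A y‖ := by
      rw [norm_smul, Real.norm_eq_abs, abs_of_pos hlam]
    have h2 : ‖x - y‖ - ‖lam • (A x - A y)‖ ≤ ‖d‖ := by
      rw [hd]; exact norm_sub_norm_le _ _
    rw [h1] at h2; linarith
  have hdpos : (0:ℝ) < ‖d‖ := lt_of_lt_of_le (by nlinarith) hdlow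
  -- inner (x-y) d ≥ (1-μ)‖x-y‖²
  have hinlow : (1 - μ) * ‖x - y‖ ^ 2 ≤ ⟪x - y, d⟫ := by
    have : ⟪x - y, d⟫ = ‖x - y‖^2 - lam * ⟪x - y, A x - A y⟫ := by
      rw [hd, inner_sub_right, inner_smul_right, real_inner_self_eq_norm_sq]
    rw [this]
    have hcs : ⟪x - y, A x - A y⟫ ≤ ‖x - y‖ * ‖A x - A y‖ := real_inner_le_norm _ _
    nlinarith [norm_nonneg (A x - A y)]
  have hρ0 : 0 ≤ ρ := by
    rw [hρ]
    apply div_nonneg _ (by positivity)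
    nlinarith
  have hdd : ⟪x - y, d⟫ = ρ * ‖d‖ ^ 2 := by
    rw [hρ]; field_simp
  -- VI + pseudo-monotonicity: ⟪A y, xs − y⟫ ≤ 0
  have hAy : ⟪A y, xs - y⟫ ≤ 0 := by
    have h1 : (0:ℝ) ≤ ⟪A y, y - xs⟫ := hpm xs y (hxs y hyS)
    have : ⟪A y, xs - y⟫ = -⟪A y, y - xs⟫ := by
      rw [← inner_neg_right]; congr 1; abel
    linarith [this ▸ neg_nonpos_of_nonneg h1]
  -- projection characterizations
  have h1 := proj_char hScv hyS hyproj xp hxpS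
  have h2 := proj_char hScv hxpS hxpproj xs hxsS
  -- Step C : λ⟪A y, y − xp⟫ ≤ ⟪d, y − xp⟫
  have hC : lam * ⟪A y, y - xp⟫ ≤ ⟪d, y - xp⟫ := by
    have key : x - lam • A x - y = d - lam • A y := by
      rw [hd, smul_sub]; abel
    rw [key] at h1
    rw [inner_sub_left, inner_smul_left] at h1
    have : ⟪d, y - xp⟫ = -⟪d, xp - y⟫ := by
      rw [← inner_neg_right]; congr 1; abel
    have hAyy : ⟪A y, y - xp⟫ = -⟪A y, xp - y⟫ := by
      rw [← inner_neg_right]; congr 1; abel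
    simp only [RCLike.star_def, conj_trivial] at h1
    rw [this, hAyy]; linarith
  -- Step A : ⟪x − xp, xs − xp⟫ ≤ γλρ ⟪A y, xs − xp⟫
  have hA : ⟪x - xp, xs - xp⟫ ≤ γ * lam * ρ * ⟪A y, xs - xp⟫ := by
    have key : x - (γ * lam * ρ) • A y - xp = (x - xp) - (γ * lam * ρ) • A y := by abel
    rw [key, inner_sub_left, inner_smul_left] at h2
    simp only [RCLike.star_def, conj_trivial] at h2
    linarith
  -- Step B
  have hB : ⟪A y, xs - xp⟫ = ⟪A y, xs - y⟫ + ⟪A y, y - xp⟫ := by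
    rw [← inner_add_right]; congr 1; abel
  -- combine: ⟪x − xp, xs − xp⟫ ≤ γρ ⟪d, y − xp⟫
  have hmain : ⟪x - xp, xs - xp⟫ ≤ γ * ρ * ⟪d, y - xp⟫ := by
    have hγρ : 0 ≤ γ * ρ := mul_nonneg hγ0.le hρ0
    calc ⟪x - xp, xs - xp⟫ ≤ γ * lam * ρ * ⟪A y, xs - xp⟫ := hA
      _ = (γ * ρ) * (lam * ⟪A y, xs - y⟫) + (γ * ρ) * (lam * ⟪A y, y - xp⟫) := by
          rw [hB]; ring
      _ ≤ 0 + (γ * ρ) * ⟪d, y - xp⟫ := by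
          have t1 : (γ * ρ) * (lam * ⟪A y, xs - y⟫) ≤ 0 :=
            mul_nonpos_of_nonneg_of_nonpos hγρ (mul_nonpos_of_nonneg_of_nonpos hlam.le hAy)
          have t2 : (γ * ρ) * (lam * ⟪A y, y - xp⟫) ≤ (γ * ρ) * ⟪d, y - xp⟫ :=
            mul_le_mul_of_nonneg_left hC hγρ
          linarith
      _ = γ * ρ * ⟪d, y - xp⟫ := by ring
  -- decompose ⟪d, y − xp⟫
  have hdyxp : ⟪d, y - xp⟫ = ⟪d, x - xp⟫ - ρ * ‖d‖ ^ 2 := by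
    have : ⟪d, y - xp⟫ = ⟪d, x - xp⟫ - ⟪d, x - y⟫ := by
      rw [← inner_sub_right]; congr 1; abel
    have h3 : ⟪d, x - y⟫ = ρ * ‖d‖ ^ 2 := by rw [real_inner_comm]; exact hdd
    rw [this, h3]
  -- norm identities
  have id1 : ‖xp - xs‖ ^ 2 = ‖x - xs‖ ^ 2 - ‖x - xp‖ ^ 2 + 2 * ⟪x - xp, xs - xp⟫ := by
    have e : xp - xs = (x - xs) - (x - xp) := by abel
    rw [e, norm_sub_sq_real]
    have e2 : ⟪x - xp, xs - xp⟫ = ‖x - xp‖^2 - ⟪x - xs, x - xp⟫ := by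
      have : xs - xp = (x - xp) - (x - xs) := by abel
      rw [this, inner_sub_right, real_inner_self_eq_norm_sq, real_inner_comm]
    rw [e2]; ring
  have id2 : ‖x - xp - (γ * ρ) • d‖ ^ 2
      = ‖x - xp‖ ^ 2 - 2 * (γ * ρ) * ⟪x - xp, d⟫ + (γ * ρ)^2 * ‖d‖^2 := by
    rw [norm_sub_sq_real, inner_smul_right, norm_smul, Real.norm_eq_abs]
    rw [mul_pow, sq_abs]
    ring
  have hcomm : ⟪d, x - xp⟫ = ⟪x - xp, d⟫ := real_inner_comm _ _
  rw [hdyxp, hcomm] at hmain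
  rw [id1, id2]
  nlinarith [hmain]
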